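/- Let r be an admissible control and let S, I be the corresponding solution of the controlled SIR system with S(0) = x > 0 and I(0) = y > μ. Let u = min{t ≥ 0 : I(t) = μ} be the (finite, attained) eradication time. Then β S(u) < γ. -/

import Mathlib

open MeasureTheory Set Filter Topology
open scoped Classical

noncomputable section

/-- An admissible vaccination-rate control: a measurable `r : ℝ → ℝ` with
`0 ≤ r t ≤ 1` for a.e. `t ≥ 0`. -/
def Admissible (r : ℝ → ℝ) : Prop :=
  Measurable r ∧ ∀ᵐ t : ℝ ∂volume, 0 ≤ t → 0 ≤ r t ∧ r t ≤ 1

/-- `S, I` is a solution of the controlled SIR system with parameters `β, γ`,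
control `r`, and initial data `x, y`:  they are continuous on `[0,∞)` and satisfy
`S t = x - ∫₀ᵗ (β S I + r S)` and `I t = y + ∫₀ᵗ (β S I - γ I)` for all `t ≥ 0`. -/
def IsSIRSol (β γ : ℝ) (r : ℝ → ℝ) (x y : ℝ) (S I : ℝ → ℝ) : Prop :=
  ContinuousOn S (Ici 0) ∧ ContinuousOn I (Ici 0) ∧
  (∀ t : ℝ, 0 ≤ t → S t = x - ∫ s in (0:ℝ)..t, (β * S s * I s + r s * S s)) ∧
  (∀ t : ℝ, 0 ≤ t → I t = y + ∫ s in (0:ℝ)..t, (β * S s * I s - γ * I s))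

/-- The susceptible component `S^r` of the solution of the controlled SIR system
(chosen via choice; it is unique on `[0,∞)`). -/
def sirS (β γ : ℝ) (r : ℝ → ℝ) (x y : ℝ) : ℝ → ℝ :=
  if h : ∃ p : (ℝ → ℝ) × (ℝ → ℝ), IsSIRSol β γ r x y p.1 p.2 then h.choose.1 else 0

/-- The infected component `I^r` of the solution of the controlled SIR system. -/
def sirI (β γ : ℝ) (r : ℝ → ℝ) (x y : ℝ) : ℝ → ℝ :=
  if h : ∃ p : (ℝ → ℝ) × (ℝ → ℝ), IsSIRSol β γ r x y p.1 p.2 then h.choose.2 else 0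

/-- The eradication time `u^r(x,y) = min { t ≥ 0 : I^r(t) = μ }`. -/
def eradTime (β γ μ : ℝ) (r : ℝ → ℝ) (x y : ℝ) : ℝ :=
  sInf {t : ℝ | 0 ≤ t ∧ sirI β γ r x y t = μ}

/-- The value function `u(x,y) = inf { u^r(x,y) : r admissible }`. -/
def value (β γ μ : ℝ) (x y : ℝ) : ℝ :=
  sInf {T : ℝ | ∃ r : ℝ → ℝ, Admissible r ∧ T = eradTime β γ μ r x y}

/-- The triangle `T_{N,δ} = {(x,y) : x ≥ δ, y ≥ μ + δ, x + y ≤ N}`. -/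
def Triangle (μ N δ : ℝ) : Set (ℝ × ℝ) :=
  {p : ℝ × ℝ | δ ≤ p.1 ∧ μ + δ ≤ p.2 ∧ p.1 + p.2 ≤ N}

/-- The partial derivative `∂ₓ u^r(z,w)` of the eradication time. -/
def uDx (β γ μ : ℝ) (r : ℝ → ℝ) (z w : ℝ) : ℝ :=
  deriv (fun a => eradTime β γ μ r a w) z

/-- The partial derivative `∂_y u^r(z,w)` of the eradication time. -/
def uDy (β γ μ : ℝ) (r : ℝ → ℝ) (z w : ℝ) : ℝ :=
  deriv (fun b => eradTime β γ μ r z b) w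

/-- The switching control `r_τ`: `0` on `[0,τ]` and `1` on `(τ,∞)`. -/
def switchCtrl (τ : ℝ) : ℝ → ℝ := fun t => if t ≤ τ then 0 else 1

/-- At the eradication time `u = min {t ≥ 0 : I(t) = μ}` one has
`β S(u) < γ`. -/
theorem beta_S_eradication_lt_gamma
    (β γ μ : ℝ) (hβ : 0 < β) (hγ : 0 < γ) (hμ : 0 < μ)
    (r : ℝ → ℝ) (hr : Admissible r)
    (x y : ℝ) (hx : 0 < x) (hy : μ < y)
    (S I : ℝ → ℝ) (hSI : IsSIRSol β γ r x y S I)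
    (u : ℝ) (hu : IsLeast {t : ℝ | 0 ≤ t ∧ I t = μ} u) :
    β * S u < γ := by
  obtain ⟨hScont, hIcont, hSeq, hIeq⟩ := hSI
  obtain ⟨⟨hu0, hIu⟩, hleast⟩ := hu
  have hI0 : I 0 = y := by simpa using hIeq 0 le_rfl
  have hupos : 0 < u := by
    rcases hu0.lt_or_eq with h | h
    · exact h
    · exfalso; rw [← h] at hIu; rw [hI0] at hIu; linarith
  -- I t > μ for t ∈ [0, u)
  have hImu : ∀ t, 0 ≤ t → t < u → μ < I t := by
    intro t ht htu
    by_contra hle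
    push_neg at hle
    rcases lt_or_eq_of_le hle with h | h
    · have hIcc : ContinuousOn I (Icc 0 t) :=
        hIcont.mono (fun s hs => hs.1)
      have hmem : μ ∈ Icc (I t) (I 0) := ⟨le_of_lt h, by rw [hI0]; linarith⟩
      obtain ⟨s, hs, hsy⟩ := intermediate_value_Icc' ht hIcc hmem
      have := hleast ⟨hs.1, hsy⟩
      linarith [hs.2]
    · have := hleast ⟨ht, h⟩
      linarith
  by_contra hcon
  push_neg at hcon
  have hSu : 0 < S u := by nlinarith
  -- choose t₀ < u with S close to S u on [t₀, u]
  obtain ⟨ε, hε, hball⟩ :=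
    Metric.continuousWithinAt_iff.mp (hScont u hu0) (S u / 2) (by positivity)
  set t₀ : ℝ := max (u - ε / 2) (u / 2) with ht₀def
  have ht₀0 : 0 < t₀ := lt_of_lt_of_le (by linarith) (le_max_right _ _)
  have ht₀u : t₀ < u := max_lt (by linarith) (by linarith)
  have hSpos : ∀ s ∈ Icc t₀ u, S u / 2 < S s := by
    intro s hs
    have hs0 : (0:ℝ) ≤ s := le_trans ht₀0.le hs.1
    have hdist : dist s u < ε := by
      rw [Real.dist_eq, abs_of_nonpos (by linarith [hs.2])]
      have : u - ε / 2 ≤ t₀ := le_max_left _ _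
      linarith [hs.1]
    have := hball hs0 hdist
    rw [Real.dist_eq] at this
    have := abs_lt.mp this
    linarith [this.1]
  -- integrability of the S-integrand
  have hf_int : ∀ a b : ℝ, 0 ≤ a → a ≤ b →
      IntervalIntegrable (fun s => β * S s * I s + r s * S s) volume a b := by
    intro a b ha hab
    have hsub : Icc a b ⊆ Ici 0 := fun s hs => le_trans ha hs.1
    have hS : ContinuousOn S (Icc a b) := hScont.mono hsub
    have hI : ContinuousOn I (Icc a b) := hIcont.mono hsub
    have h1 : IntervalIntegrable (fun s => β * S s * I s) volume a b := by
      apply ContinuousOn.intervalIntegrable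
      rw [uIcc_of_le hab]
      exact (continuousOn_const.mul hS).mul hI
    have h2 : IntervalIntegrable (fun s => r s * S s) volume a b := by
      rw [intervalIntegrable_iff_integrableOn_Ioc_of_le hab]
      obtain ⟨M, hM⟩ := isCompact_Icc.exists_bound_of_continuousOn hS
      have hmeas : AEStronglyMeasurable (fun s => r s * S s)
          (volume.restrict (Ioc a b)) := by
        exact (hr.1.aestronglyMeasurable.restrict).mul
          ((hS.mono Ioc_subset_Icc_self).aestronglyMeasurable measurableSet_Ioc)
      apply Integrable.mono' ((integrableOn_const_iff (C := M) (by finiteness)).mpr (Or.inr measure_Ioc_lt_top)) hmeas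
      filter_upwards [ae_restrict_of_ae hr.2, ae_restrict_mem measurableSet_Ioc]
        with s hrs hsmem
      have hs0 : (0:ℝ) ≤ s := le_trans ha hsmem.1.le
      obtain ⟨hr0, hr1⟩ := hrs hs0
      have hSb : |S s| ≤ M := hM s (Ioc_subset_Icc_self hsmem)
      calc ‖r s * S s‖ = |r s| * |S s| := abs_mul _ _
        _ ≤ 1 * M := by
            apply mul_le_mul _ hSb (abs_nonneg _) zero_le_one
            rw [abs_of_nonneg hr0]; exact hr1
        _ = M := one_mul M
    exact h1.add h2
  -- splitting the S-equation
  have hsplit : ∀ t, 0 ≤ t → t ≤ u →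
      S t - S u = ∫ s in t..u, (β * S s * I s + r s * S s) := by
    intro t ht htu
    have h1 := hSeq t ht
    have h2 := hSeq u hu0
    have h3 := intervalIntegral.integral_add_adjacent_intervals
      (hf_int 0 t le_rfl ht) (hf_int t u ht htu)
    rw [h1, h2]; linarith
  -- S is strictly above S u on [t₀, u)
  have hSmono : ∀ t ∈ Ico t₀ u, S u < S t := by
    intro t ht
    have ht0 : (0:ℝ) ≤ t := le_trans ht₀0.le ht.1
    have htu : t ≤ u := ht.2.le
    have hc : (0:ℝ) < β * (S u / 2) * μ := by positivity
    have hlow : (u - t) * (β * (S u / 2) * μ) ≤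
        ∫ s in t..u, (β * S s * I s + r s * S s) := by
      have hmono := intervalIntegral.integral_mono_ae_restrict
        (f := fun _ => β * (S u / 2) * μ)
        (g := fun s => β * S s * I s + r s * S s) htu
        intervalIntegrable_const (hf_int t u ht0 htu) ?_
      · rwa [intervalIntegral.integral_const, smul_eq_mul] at hmono
      filter_upwards [ae_restrict_of_ae hr.2, ae_restrict_mem measurableSet_Icc]
        with s hrs hsmem
      have hs0 : (0:ℝ) ≤ s := le_trans ht0 hsmem.1
      obtain ⟨hr0, _⟩ := hrs hs0
      have hSs : S u / 2 < S s := hSpos s ⟨le_trans ht.1 hsmem.1, hsmem.2⟩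
      have hIs : μ ≤ I s := by
        rcases lt_or_eq_of_le hsmem.2 with h | h
        · exact (hImu s hs0 h).le
        · rw [h, hIu]
      have hstep : (S u / 2) * μ ≤ S s * I s :=
        mul_le_mul hSs.le hIs hμ.le (by linarith)
      have h1 : β * (S u / 2) * μ ≤ β * S s * I s := by
        nlinarith [mul_le_mul_of_nonneg_left hstep hβ.le]
      have h2 : 0 ≤ r s * S s := mul_nonneg hr0 (by linarith)
      linarith
    have := hsplit t ht0 htu
    nlinarith [ht.2]
  -- I is strictly increasing on [t₀, u]: contradiction
  have hg_int : ∀ a b : ℝ, 0 ≤ a → a ≤ b →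
      IntervalIntegrable (fun s => β * S s * I s - γ * I s) volume a b := by
    intro a b ha hab
    have hsub : Icc a b ⊆ Ici 0 := fun s hs => le_trans ha hs.1
    apply ContinuousOn.intervalIntegrable
    rw [uIcc_of_le hab]
    exact ((continuousOn_const.mul (hScont.mono hsub)).mul
      (hIcont.mono hsub)).sub (continuousOn_const.mul (hIcont.mono hsub))
  have hIsplit : I u - I t₀ = ∫ s in t₀..u, (β * S s * I s - γ * I s) := by
    have h1 := hIeq t₀ ht₀0.le
    have h2 := hIeq u hu0
    have h3 := intervalIntegral.integral_add_adjacent_intervals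
      (hg_int 0 t₀ le_rfl ht₀0.le) (hg_int t₀ u ht₀0.le ht₀u.le)
    rw [h1, h2]; linarith
  have hpos : 0 < ∫ s in t₀..u, (β * S s * I s - γ * I s) := by
    apply intervalIntegral.intervalIntegral_pos_of_pos_on
      (hg_int t₀ u ht₀0.le ht₀u.le) _ ht₀u
    intro s hs
    have hs0 : (0:ℝ) ≤ s := le_trans ht₀0.le hs.1.le
    have hIs : μ < I s := hImu s hs0 hs.2
    have hSs : S u < S s := hSmono s ⟨hs.1.le, hs.2⟩
    have hIs0 : 0 < I s := hμ.trans hIs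
    have h1 : β * S u * I s < β * S s * I s :=
      mul_lt_mul_of_pos_right ((mul_lt_mul_iff_right₀ hβ).mpr hSs) hIs0
    have h2 : γ * I s ≤ β * S u * I s := mul_le_mul_of_nonneg_right hcon hIs0.le
    linarith
  have hIt₀ : μ < I t₀ := hImu t₀ ht₀0.le ht₀u
  rw [← hIsplit, hIu] at hpos
  linarith
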